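/- If a λ⊥-term has a right inverse, then the selector λt x₁ … xₘ.t is a right inverse of it, where m is the number of arguments of the head variable in its head normal form λz.zM₁…Mₘ. -/

import Mathlib

/-- Terms of the λ⊥-calculus (de Bruijn indices). -/
inductive Tm : Type
  | var : ℕ → Tm
  | bot : Tm
  | lam : Tm → Tm
  | app : Tm → Tm → Tm
  deriving DecidableEq

namespace Tm

/-- Lift (shift by one) all de Bruijn indices ≥ k. -/
def lift : Tm → ℕ → Tm
  | var n, k => if n < k then var n else var (n+1)
  | bot, _ => bot
  | lam M, k => lam (lift M (k+1))
  | app M N, k => app (lift M k) (lift N k)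

/-- Capture-avoiding substitution of N for variable k. -/
def subst : Tm → ℕ → Tm → Tm
  | var n, k, N => if n < k then var n else if n = k then N else var (n-1)
  | bot, _, _ => bot
  | lam M, k, N => lam (subst M (k+1) (lift N 0))
  | app M P, k, N => app (subst M k N) (subst P k N)

/-- One-step β⊥-reduction (compatible closure). -/
inductive Step : Tm → Tm → Prop
  | beta (M N : Tm) : Step (app (lam M) N) (subst M 0 N)
  | botApp (N : Tm) : Step (app bot N) bot
  | botLam : Step (lam bot) bot
  | appL {M M'} (N) : Step M M' → Step (app M N) (app M' N)
  | appR (M) {N N'} : Step N N' → Step (app M N) (app M N')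
  | lamC {M M'} : Step M M' → Step (lam M) (lam M')

/-- Multi-step reduction. -/
def Red : Tm → Tm → Prop := Relation.ReflTransGen Step

/-- β⊥-conversion: M = N iff they have a common reduct. -/
def Conv (M N : Tm) : Prop := ∃ P, Red M P ∧ Red N P

/-- The identity combinator I = λx.x. -/
def iTm : Tm := lam (var 0)

/-- Composition M ∘ N = λz.M(Nz). -/
def comp (M N : Tm) : Tm := lam (app (lift M 0) (app (lift N 0) (var 0)))

/-- Apply M to a list of arguments. -/
def applist (M : Tm) (Ms : List Tm) : Tm := Ms.foldl app M

/-- Iterated λ-abstraction. -/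
def iterLam : ℕ → Tm → Tm
  | 0, M => M
  | n+1, M => lam (iterLam n M)

/-- The selector λt x₁ … xₘ. t  (a simple right inverse). -/
def sel (m : ℕ) : Tm := iterLam (m+1) (var m)

/-- Number of initial λ-abstractions of a term. -/
def leadLams : Tm → ℕ
  | lam M => leadLams M + 1
  | _ => 0

end Tm

mutual
/-- Strict intersection types μ ::= φ | ω | σ → μ. -/
inductive STy : Type
  | tvar : ℕ → STy
  | omega : STy
  | arrow : ITy → STy → STy
/-- Intersections σ ::= μ | σ ∧ σ. -/
inductive ITy : Type
  | strict : STy → ITy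
  | inter : ITy → ITy → ITy
end

/-- The subtyping preorder on (strict) intersection types. -/
inductive SubTy : ITy → ITy → Prop
  | refl (σ) : SubTy σ σ
  | trans {σ τ ρ} : SubTy σ τ → SubTy τ ρ → SubTy σ ρ
  | toOmega (σ) : SubTy σ (.strict .omega)
  | omegaArr : SubTy (.strict .omega) (.strict (.arrow (.strict .omega) .omega))
  | interL (σ τ) : SubTy (.inter σ τ) σ
  | interR (σ τ) : SubTy (.inter σ τ) τ
  | interMono {σ₁ σ₂ τ₁ τ₂} : SubTy σ₁ τ₁ → SubTy σ₂ τ₂ → SubTy (.inter σ₁ σ₂) (.inter τ₁ τ₂)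
  | arrow {σ τ : ITy} {μ ν : STy} : SubTy τ σ → SubTy (.strict μ) (.strict ν) →
      SubTy (.strict (.arrow σ μ)) (.strict (.arrow τ ν))

/-- σ ∼ τ : mutual subtyping. -/
def EqvTy (σ τ : ITy) : Prop := SubTy σ τ ∧ SubTy τ σ

/-- μ is a conjunct (component) of the intersection σ. -/
inductive IsComp : STy → ITy → Prop
  | strict (μ) : IsComp μ (.strict μ)
  | left {μ σ} (τ) : IsComp μ σ → IsComp μ (.inter σ τ)
  | right {μ τ} (σ) : IsComp μ τ → IsComp μ (.inter σ τ)

/-- The essential intersection type assignment system (contexts are de Bruijn lists). -/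
inductive Der : List ITy → Tm → STy → Prop
  | var {Γ n σ μ} : Γ[n]? = some σ → IsComp μ σ → Der Γ (.var n) μ
  | omega (Γ M) : Der Γ M .omega
  | sub {Γ M μ ν} : Der Γ M μ → SubTy (.strict μ) (.strict ν) → Der Γ M ν
  | lam {Γ M σ μ} : Der (σ :: Γ) M μ → Der Γ (.lam M) (.arrow σ μ)
  | app {Γ M N σ μ} : Der Γ M (.arrow σ μ) → (∀ ν, IsComp ν σ → Der Γ N ν) →
      Der Γ (.app M N) μ

/-- A strict type is inhabited if some closed term has it. -/
def InhabS (μ : STy) : Prop := ∃ M, Der [] M μ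

/-- An intersection is inhabited if a single closed term has all its conjuncts. -/
def InhabI (σ : ITy) : Prop := ∃ M, ∀ μ, IsComp μ σ → Der [] M μ

/-- σ → ρ is inhabited: one term inhabits σ → μ for every conjunct μ of ρ. -/
def InhabArrow (σ ρ : ITy) : Prop := ∃ M, ∀ μ, IsComp μ ρ → Der [] M (.arrow σ μ)

/-- ρ₁ → … → ρₘ → μ. -/
def arrows (l : List ITy) (μ : STy) : STy := l.foldr .arrow μ

/-- μ ◁ ν : μ is a retract of ν. -/
def Retract (μ ν : STy) : Prop :=
  ∃ L R, Der [] L (.arrow (.strict ν) μ) ∧ Der [] R (.arrow (.strict μ) ν) ∧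
    Tm.Conv (Tm.comp L R) Tm.iTm


namespace Tm

theorem red_appL {M M' : Tm} (N : Tm) (h : Red M M') : Red (app M N) (app M' N) :=
  Relation.ReflTransGen.lift (fun x => app x N) (fun _ _ s => Step.appL N s) _ _ h

theorem red_appR (M : Tm) {N N' : Tm} (h : Red N N') : Red (app M N) (app M N') :=
  Relation.ReflTransGen.lift (fun x => app M x) (fun _ _ s => Step.appR M s) _ _ h

theorem red_lam {M M' : Tm} (h : Red M M') : Red (lam M) (lam M') :=
  Relation.ReflTransGen.lift lam (fun _ _ s => Step.lamC s) _ _ h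

theorem red_applist {M M' : Tm} (l : List Tm) (h : Red M M') :
    Red (applist M l) (applist M' l) := by
  induction l generalizing M M' with
  | nil => exact h
  | cons a l ih => exact ih (red_appL a h)

theorem lift_lift (M : Tm) : ∀ i k, i ≤ k →
    lift (lift M i) (k+1) = lift (lift M k) i := by
  induction M with
  | var n =>
    intro i k h
    simp only [lift]
    split_ifs <;> simp only [lift] <;> split_ifs <;>
      first | rfl | (exfalso; omega) | (congr 1 <;> omega)
  | bot => intro i k h; rfl
  | lam M ih =>
    intro i k h
    simp only [lift, ih (i+1) (k+1) (by omega)]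
  | app M N ihM ihN =>
    intro i k h
    simp only [lift, ihM i k h, ihN i k h]

theorem lift_subst (M : Tm) : ∀ j k (N : Tm), j ≤ k →
    lift (subst M j N) k = subst (lift M (k+1)) j (lift N k) := by
  induction M with
  | var n =>
    intro j k N h
    simp only [subst, lift]
    split_ifs <;> simp only [subst, lift] <;> split_ifs <;>
      first | rfl | (exfalso; omega) | (congr 1 <;> omega)
  | bot => intro j k N h; rfl
  | lam M ih =>
    intro j k N h
    simp only [subst, lift, ih (j+1) (k+1) (lift N 0) (by omega)]
    rw [lift_lift N 0 k (by omega)]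
  | app M P ihM ihP =>
    intro j k N h
    simp only [subst, lift, ihM j k N h, ihP j k N h]

theorem lift_step {M M' : Tm} (h : Step M M') : ∀ k, Step (lift M k) (lift M' k) := by
  induction h with
  | beta M N =>
    intro k
    have := Step.beta (lift M (k+1)) (lift N k)
    rwa [← lift_subst M 0 k N (by omega)] at this
  | botApp N => intro k; exact Step.botApp (lift N k)
  | botLam => intro k; exact Step.botLam
  | appL N _ ih => intro k; exact Step.appL _ (ih k)
  | appR M _ ih => intro k; exact Step.appR _ (ih k)
  | lamC _ ih => intro k; exact Step.lamC (ih (k+1))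

theorem lift_red {M M' : Tm} (h : Red M M') (k : ℕ) : Red (lift M k) (lift M' k) :=
  Relation.ReflTransGen.lift (fun x => lift x k) (fun _ _ s => lift_step s k) _ _ h

theorem lift_iterLam_var : ∀ d j k, j < d + k →
    lift (iterLam d (var j)) k = iterLam d (var j) := by
  intro d
  induction d with
  | zero => intro j k h; simp only [iterLam, lift]; rw [if_pos (by omega)]
  | succ d ih =>
    intro j k h
    simp only [iterLam, lift, ih j (k+1) (by omega)]

theorem subst_iterLam_self : ∀ m j, subst (iterLam m (var (m+j))) j (var j) = iterLam m (var (m+j)) := by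
  intro m
  induction m with
  | zero =>
    intro j
    simp only [iterLam, subst]
    rw [if_neg (by omega), if_pos (by omega)]; congr 1 <;> omega
  | succ m ih =>
    intro j
    have hl : lift (var j) 0 = var (j+1) := by simp only [lift]; rw [if_neg (by omega)]
    simp only [iterLam, subst, hl]
    have := ih (j+1)
    rw [show m + 1 + j = m + (j+1) by omega]
    rw [this]

theorem subst_iterLam_drop : ∀ n j (N : Tm),
    subst (iterLam n (var (n+j+1))) j N = iterLam n (var (n+j)) := by
  intro n
  induction n with
  | zero =>
    intro j N
    simp only [iterLam, subst]
    rw [if_neg (by omega), if_neg (by omega)]; congr 1 <;> omega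
  | succ n ih =>
    intro j N
    simp only [iterLam, subst]
    rw [show n + 1 + j + 1 = n + (j+1) + 1 by omega, ih, show n + (j+1) = n + 1 + j by omega]

theorem lift_applist (l : List Tm) : ∀ (M : Tm) k,
    lift (applist M l) k = applist (lift M k) (l.map (fun x => lift x k)) := by
  induction l with
  | nil => intro M k; rfl
  | cons a l ih => intro M k; simpa [applist, lift] using ih (app M a) k

theorem subst_applist (l : List Tm) : ∀ (M : Tm) k N,
    subst (applist M l) k N = applist (subst M k N) (l.map (fun x => subst x k N)) := by
  induction l with
  | nil => intro M k N; rfl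
  | cons a l ih => intro M k N; simpa [applist, subst] using ih (app M a) k N

theorem red_selector_applist : ∀ (Ns : List Tm),
    Red (applist (iterLam Ns.length (var Ns.length)) Ns) (var 0) := by
  intro Ns
  induction Ns with
  | nil => exact Relation.ReflTransGen.refl
  | cons N Ns ih =>
    have hstep : Step (app (lam (iterLam Ns.length (var (Ns.length + 1)))) N)
        (iterLam Ns.length (var Ns.length)) := by
      have := Step.beta (iterLam Ns.length (var (Ns.length + 1))) N
      rwa [show Ns.length + 1 = Ns.length + 0 + 1 by omega,
        subst_iterLam_drop Ns.length 0 N, Nat.add_zero] at this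
    exact Relation.ReflTransGen.trans
      (red_applist Ns (Relation.ReflTransGen.single hstep)) ih

end Tm

/-- if a term has a right inverse, then the selector λt x₁…xₘ.t is a
right inverse of it, m being the number of arguments of the head variable in its
hnf λz.zM₁…Mₘ. -/
theorem selector_right_inverse {M : Tm} {Ms : List Tm}
    (hinv : ∃ R, Tm.Conv (Tm.comp M R) Tm.iTm)
    (hhnf : Tm.Red M (Tm.lam (Tm.applist (Tm.var 0) Ms))) :
    Tm.Conv (Tm.comp M (Tm.sel Ms.length)) Tm.iTm := by
  clear hinv
  refine ⟨Tm.iTm, ?_, Relation.ReflTransGen.refl⟩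
  have hsel : Tm.lift (Tm.sel Ms.length) 0 = Tm.sel Ms.length := by
    simpa [Tm.sel] using Tm.lift_iterLam_var (Ms.length+1) Ms.length 0 (by omega)
  set m := Ms.length with hm
  set Ms' : List Tm := Ms.map (fun x => Tm.lift x 1) with hMs'
  set P : Tm := Tm.iterLam m (Tm.var m) with hP
  set Ms'' : List Tm := Ms'.map (fun x => Tm.subst x 0 P) with hMs''
  have h1 : Tm.Red (Tm.lift M 0) (Tm.lam (Tm.applist (Tm.var 0) Ms')) := by
    have h := Tm.lift_red hhnf 0
    have he : Tm.lift (Tm.lam (Tm.applist (Tm.var 0) Ms)) 0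
        = Tm.lam (Tm.applist (Tm.var 0) Ms') := by
      simp [Tm.lift, Tm.lift_applist, hMs']
    rwa [he] at h
  have h2 : Tm.Step (Tm.app (Tm.sel m) (Tm.var 0)) P := by
    have h := Tm.Step.beta (Tm.iterLam m (Tm.var m)) (Tm.var 0)
    have he : Tm.subst (Tm.iterLam m (Tm.var m)) 0 (Tm.var 0)
        = Tm.iterLam m (Tm.var m) := by
      simpa using Tm.subst_iterLam_self m 0
    rw [he] at h
    exact h
  have h3 : Tm.Step (Tm.app (Tm.lam (Tm.applist (Tm.var 0) Ms')) P)
      (Tm.applist P Ms'') := by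
    have h := Tm.Step.beta (Tm.applist (Tm.var 0) Ms') P
    have he : Tm.subst (Tm.applist (Tm.var 0) Ms') 0 P = Tm.applist P Ms'' := by
      rw [Tm.subst_applist]
      simp [Tm.subst, hMs'']
    rwa [he] at h
  have h4 : Tm.Red (Tm.applist P Ms'') (Tm.var 0) := by
    have h := Tm.red_selector_applist Ms''
    have hlen : Ms''.length = m := by simp [hMs'', hMs', hm]
    rwa [hlen] at h
  have hbody : Tm.Red (Tm.app (Tm.lift M 0) (Tm.app (Tm.lift (Tm.sel m) 0) (Tm.var 0)))
      (Tm.var 0) := by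
    rw [hsel]
    exact ((Tm.red_appR _ (Relation.ReflTransGen.single h2)).trans
      ((Tm.red_appL _ h1).trans ((Relation.ReflTransGen.single h3).trans h4)))
  exact Tm.red_lam hbody
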